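/- Let λ > 0 and let {T_t}_{t>0} be the Bessel Poisson semigroup e^{−t√Δ_λ} with kernel P_t^{[λ]}(x,y). Then T_t(1) = 1 for all t > 0, i.e. ∫₀^∞ P_t^{[λ]}(x,y) y^{2λ} dy = 1 for all t, x > 0. -/

import Mathlib

noncomputable section
open MeasureTheory Set

/-- The Bessel Poisson kernel `P_t^{[λ]}(x,y)`. -/
def besselP (lam t x y : ℝ) : ℝ :=
  (2 * lam * t / Real.pi) * ∫ θ in Ioo (0 : ℝ) Real.pi,
    (Real.sin θ) ^ (2 * lam - 1) / (x ^ 2 + y ^ 2 + t ^ 2 - 2 * x * y * Real.cos θ) ^ (lam + 1)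

namespace BesselPoissonAux
open Real

/-! ### Beta-type integrals -/

lemma beta01_integrable {a b : ℝ} (ha : 0 < a) (hb : 0 < b) :
    IntegrableOn (fun r : ℝ => r ^ (a - 1) * (1 - r) ^ (b - 1)) (Ioo 0 1) := by
  have hc := Complex.betaIntegral_convergent (u := (a:ℂ)) (v := (b:ℂ)) (by simpa using ha)
    (by simpa using hb)
  rw [intervalIntegrable_iff_integrableOn_Ioo_of_le zero_le_one] at hc
  have := hc.re
  refine (IntegrableOn.congr_fun this ?_ measurableSet_Ioo)
  intro r hr
  have h1 : ((r:ℂ)) ^ ((a:ℂ) - 1) = ((r ^ (a-1) : ℝ) : ℂ) := by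
    rw [Complex.ofReal_cpow hr.1.le]; push_cast; ring_nf
  have h2 : ((1 - (r:ℂ))) ^ ((b:ℂ) - 1) = (((1 - r) ^ (b-1) : ℝ) : ℂ) := by
    rw [show (1 - (r:ℂ)) = (((1 - r : ℝ)) : ℂ) by push_cast; ring,
      Complex.ofReal_cpow (by linarith [hr.2])]
    push_cast; ring_nf
  simp [h1, h2, ← Complex.ofReal_mul]

lemma beta01_value {a b : ℝ} (ha : 0 < a) (hb : 0 < b) :
    ∫ r in Ioo (0:ℝ) 1, r ^ (a - 1) * (1 - r) ^ (b - 1)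
      = Gamma a * Gamma b / Gamma (a + b) := by
  have h := Complex.Gamma_mul_Gamma_eq_betaIntegral (s := (a:ℂ)) (t := (b:ℂ))
    (by simpa using ha) (by simpa using hb)
  have hbeta : Complex.betaIntegral (a:ℂ) (b:ℂ)
      = ((∫ r in Ioo (0:ℝ) 1, r ^ (a - 1) * (1 - r) ^ (b - 1) : ℝ) : ℂ) := by
    rw [Complex.betaIntegral]
    rw [show (∫ r in Ioo (0:ℝ) 1, r ^ (a - 1) * (1 - r) ^ (b - 1))
        = ∫ r in (0:ℝ)..1, r ^ (a - 1) * (1 - r) ^ (b - 1) by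
      rw [intervalIntegral.integral_of_le zero_le_one, integral_Ioc_eq_integral_Ioo]]
    rw [← intervalIntegral.integral_ofReal]
    apply intervalIntegral.integral_congr
    intro r hr
    rw [uIcc_of_le zero_le_one] at hr
    have h1 : ((r:ℂ)) ^ ((a:ℂ) - 1) = ((r ^ (a-1) : ℝ) : ℂ) := by
      rw [Complex.ofReal_cpow hr.1]; push_cast; ring_nf
    have h2 : ((1 - (r:ℂ))) ^ ((b:ℂ) - 1) = (((1 - r) ^ (b-1) : ℝ) : ℂ) := by
      rw [show (1 - (r:ℂ)) = (((1 - r : ℝ)) : ℂ) by push_cast; ring,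
        Complex.ofReal_cpow (by linarith [hr.2])]
      push_cast; ring_nf
    simp [h1, h2, ← Complex.ofReal_mul]
  rw [hbeta, ← Complex.ofReal_add, Complex.Gamma_ofReal, Complex.Gamma_ofReal,
    Complex.Gamma_ofReal, ← Complex.ofReal_mul, ← Complex.ofReal_mul] at h
  have h' := Complex.ofReal_injective h
  have hG : Gamma (a + b) ≠ 0 := (Gamma_pos_of_pos (by linarith)).ne'
  field_simp [hG] at h' ⊢
  linarith [h']

lemma phi_image : (fun r : ℝ => r / (1 - r)) '' (Ioo 0 1) = Ioi 0 := by
  ext w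
  simp only [mem_image, mem_Ioo, mem_Ioi]
  constructor
  · rintro ⟨r, ⟨h0, h1⟩, rfl⟩
    exact div_pos h0 (by linarith)
  · intro hw
    refine ⟨w / (1 + w), ⟨div_pos hw (by linarith), ?_⟩, ?_⟩
    · rw [div_lt_one (by linarith)]; linarith
    · have h1w : (1:ℝ) + w ≠ 0 := by positivity
      field_simp
      ring

lemma phi_inj : InjOn (fun r : ℝ => r / (1 - r)) (Ioo 0 1) := by
  intro r hr s hs h
  simp only at h
  rw [div_eq_div_iff (by linarith [hr.2]) (by linarith [hs.2])] at h
  nlinarith [h]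

lemma phi_deriv : ∀ r ∈ Ioo (0:ℝ) 1,
    HasDerivWithinAt (fun r : ℝ => r / (1 - r)) (((1 - r)^2)⁻¹) (Ioo 0 1) r := by
  intro r hr
  have hne : (1 - r) ≠ 0 := by intro hc; rw [sub_eq_zero] at hc; linarith [hr.2]
  have h : HasDerivAt (fun r : ℝ => r / (1 - r))
      ((1 * (1 - r) - r * (0 - 1)) / (1 - r)^2) r :=
    (hasDerivAt_id r).div ((hasDerivAt_const r 1).sub (hasDerivAt_id r)) hne
  have he : (1 * (1 - r) - r * (0 - 1)) / (1 - r)^2 = ((1 - r)^2)⁻¹ := by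
    field_simp
    ring
  rw [he] at h
  exact h.hasDerivWithinAt

lemma betaIoi_key {a b : ℝ} : ∀ r ∈ Ioo (0:ℝ) 1,
    |((1 - r)^2)⁻¹| • ((fun w : ℝ => w ^ (a - 1) * (1 + w) ^ (-(a + b))) (r / (1 - r)))
      = r ^ (a - 1) * (1 - r) ^ (b - 1) := by
  intro r hr
  have hr1 : (0:ℝ) < 1 - r := by linarith [hr.2]
  have h1 : (1:ℝ) + r / (1 - r) = (1 - r)⁻¹ := by field_simp; ring
  have h2 : (r / (1 - r)) ^ (a - 1) = r ^ (a - 1) / (1 - r) ^ (a - 1) :=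
    Real.div_rpow hr.1.le hr1.le _
  have h3 : ((1 - r)⁻¹) ^ (-(a + b)) = (1 - r) ^ (a + b) := by
    rw [← Real.rpow_neg_one (1 - r), ← Real.rpow_mul hr1.le]
    norm_num
  rw [smul_eq_mul, abs_of_pos (by positivity)]
  show ((1 - r)^2)⁻¹ * ((r/(1-r)) ^ (a-1) * (1 + r/(1-r)) ^ (-(a+b))) = _
  rw [h1, h2, h3]
  rw [show ((1 - r)^2 : ℝ) = (1 - r) ^ (2:ℝ) by rw [Real.rpow_two]]
  rw [← Real.rpow_neg hr1.le, div_eq_mul_inv, ← Real.rpow_neg hr1.le, mul_comm, mul_assoc,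
    mul_assoc, ← Real.rpow_add hr1, ← Real.rpow_add hr1]
  ring_nf

lemma betaIoi {a b : ℝ} (ha : 0 < a) (hb : 0 < b) :
    IntegrableOn (fun w : ℝ => w ^ (a - 1) * (1 + w) ^ (-(a + b))) (Ioi 0) ∧
    ∫ w in Ioi (0:ℝ), w ^ (a - 1) * (1 + w) ^ (-(a + b))
      = Gamma a * Gamma b / Gamma (a + b) := by
  constructor
  · rw [← phi_image,
      integrableOn_image_iff_integrableOn_abs_deriv_smul measurableSet_Ioo phi_deriv phi_inj]
    exact (beta01_integrable ha hb).congr_fun (fun r hr => (betaIoi_key r hr).symm)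
      measurableSet_Ioo
  · rw [← phi_image,
      integral_image_eq_integral_abs_deriv_smul measurableSet_Ioo phi_deriv phi_inj,
      ← beta01_value ha hb]
    exact setIntegral_congr_fun measurableSet_Ioo betaIoi_key

lemma sq_image : (fun v : ℝ => v ^ 2) '' (Ioi 0) = Ioi 0 := by
  ext w
  simp only [mem_image, mem_Ioi]
  constructor
  · rintro ⟨v, hv, rfl⟩; positivity
  · intro hw
    exact ⟨Real.sqrt w, Real.sqrt_pos.mpr hw, Real.sq_sqrt hw.le⟩

lemma sq_inj : InjOn (fun v : ℝ => v ^ 2) (Ioi 0) := by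
  intro v hv w hw h
  simp only [mem_Ioi] at hv hw
  simp only at h
  nlinarith [h]

lemma sq_deriv : ∀ v ∈ Ioi (0:ℝ),
    HasDerivWithinAt (fun v : ℝ => v ^ 2) (2 * v) (Ioi 0) v := by
  intro v _
  simpa using (hasDerivAt_pow 2 v).hasDerivWithinAt

lemma betaSq_key {a c : ℝ} : ∀ v ∈ Ioi (0:ℝ),
    |2 * v| • ((fun w : ℝ => w ^ (a - 1) * (1 + w) ^ (-(a + c))) (v ^ 2))
      = 2 * (v ^ (2*a - 1) * (1 + v^2) ^ (-(a + c))) := by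
  intro v hv
  simp only [mem_Ioi] at hv
  rw [smul_eq_mul, abs_of_pos (by positivity)]
  show 2 * v * ((v^2) ^ (a-1) * (1 + v^2) ^ (-(a+c))) = _
  have key1 : ((v:ℝ)^2) ^ (a-1) = v ^ (2*a - 2) := by
    rw [show ((v:ℝ)^2) = v ^ (2:ℝ) by rw [Real.rpow_two], ← Real.rpow_mul hv.le]
    ring_nf
  have key2 : v * v ^ (2*a - 2) = v ^ (2*a - 1) := by
    nth_rewrite 1 [show v = v ^ (1:ℝ) by rw [Real.rpow_one]]
    rw [← Real.rpow_add hv]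
    ring_nf
  rw [key1, show 2 * v * (v ^ (2*a-2) * (1 + v^2) ^ (-(a+c)))
      = 2 * ((v * v ^ (2*a-2)) * (1 + v^2) ^ (-(a+c))) from by ring, key2]

lemma betaSqIoi {a c : ℝ} (ha : 0 < a) (hc : 0 < c) :
    IntegrableOn (fun v : ℝ => v ^ (2*a - 1) * (1 + v^2) ^ (-(a + c))) (Ioi 0) ∧
    ∫ v in Ioi (0:ℝ), v ^ (2*a - 1) * (1 + v^2) ^ (-(a + c))
      = Gamma a * Gamma c / Gamma (a + c) / 2 := by
  obtain ⟨hint, hval⟩ := betaIoi ha hc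
  have hint2 : IntegrableOn
      (fun v : ℝ => 2 * (v ^ (2*a - 1) * (1 + v^2) ^ (-(a + c)))) (Ioi 0) := by
    rw [← sq_image] at hint
    rw [integrableOn_image_iff_integrableOn_abs_deriv_smul measurableSet_Ioi sq_deriv sq_inj]
      at hint
    exact hint.congr_fun betaSq_key measurableSet_Ioi
  constructor
  · have h2 : IntegrableOn
        (fun v : ℝ => (1/2 : ℝ) * (2 * (v ^ (2*a - 1) * (1 + v^2) ^ (-(a + c))))) (Ioi 0) :=
      hint2.const_mul (1/2 : ℝ)
    refine h2.congr_fun (fun v _ => by ring) measurableSet_Ioi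
  · have himg : ∫ w in Ioi (0:ℝ), w ^ (a - 1) * (1 + w) ^ (-(a + c))
        = ∫ v in Ioi (0:ℝ), 2 * (v ^ (2*a - 1) * (1 + v^2) ^ (-(a + c))) := by
      conv_lhs => rw [← sq_image]
      rw [integral_image_eq_integral_abs_deriv_smul measurableSet_Ioi sq_deriv sq_inj]
      exact setIntegral_congr_fun measurableSet_Ioi betaSq_key
    rw [himg, integral_const_mul] at hval
    linarith [hval]

lemma lineStd {q : ℝ} (hq : 1/2 < q) :
    Integrable (fun u : ℝ => (1 + u^2) ^ (-q)) ∧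
    ∫ u : ℝ, (1 + u^2) ^ (-q) = Gamma (1/2) * Gamma (q - 1/2) / Gamma q := by
  have hint : Integrable (fun u : ℝ => (1 + u^2) ^ (-q)) := by
    have h := integrable_rpow_neg_one_add_norm_sq (E := ℝ) (μ := volume) (r := 2*q)
      (by simp; linarith)
    have he : (fun u : ℝ => (1 + u^2) ^ (-q)) = fun x : ℝ => (1 + ‖x‖^2) ^ (-(2*q)/2) := by
      funext x
      rw [Real.norm_eq_abs, sq_abs]
      congr 1
      ring
    rw [he]
    exact h
  refine ⟨hint, ?_⟩
  obtain ⟨hi2, hv2⟩ := betaSqIoi (a := 1/2) (c := q - 1/2) (by norm_num) (by linarith)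
  have hpos : ∫ u in Ioi (0:ℝ), (1 + u^2) ^ (-q)
      = Gamma (1/2) * Gamma (q - 1/2) / Gamma q / 2 := by
    rw [show Gamma q = Gamma (1/2 + (q - 1/2)) by ring_nf, ← hv2]
    refine setIntegral_congr_fun measurableSet_Ioi (fun v hv => ?_)
    simp only [mem_Ioi] at hv
    rw [show (2 * (1/2 : ℝ) - 1) = 0 by norm_num, Real.rpow_zero, one_mul,
      show (1/2 + (q - 1/2) : ℝ) = q by ring]
  have := integral_comp_abs (f := fun u : ℝ => (1 + u^2) ^ (-q))
  simp only [sq_abs] at this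
  rw [this, hpos]
  ring

lemma lineShift {q x B : ℝ} (hq : 1/2 < q) (hB : 0 < B) :
    Integrable (fun u : ℝ => ((u - x)^2 + B) ^ (-q)) ∧
    ∫ u : ℝ, ((u - x)^2 + B) ^ (-q)
      = B ^ (1/2 - q) * (Gamma (1/2) * Gamma (q - 1/2) / Gamma q) := by
  set A := Real.sqrt B with hA
  have hA0 : 0 < A := Real.sqrt_pos.mpr hB
  have hAB : A^2 = B := Real.sq_sqrt hB.le
  have himg : (fun u : ℝ => A * u + x) '' univ = univ := by
    ext w
    simp only [image_univ, mem_range, mem_univ, iff_true]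
    exact ⟨(w - x) / A, by field_simp; ring⟩
  have hinj : InjOn (fun u : ℝ => A * u + x) univ := by
    intro u _ v _ h
    simp only at h
    have := mul_left_cancel₀ hA0.ne' (by linarith [h] : A * u = A * v)
    exact this
  have hderiv : ∀ u ∈ (univ : Set ℝ),
      HasDerivWithinAt (fun u : ℝ => A * u + x) A univ u := by
    intro u _
    simpa using ((hasDerivAt_id u).const_mul A).add_const x
  have key : ∀ u : ℝ,
      |A| • ((fun w : ℝ => ((w - x)^2 + B) ^ (-q)) (A * u + x))
        = B ^ ((1:ℝ)/2 - q) * (1 + u^2) ^ (-q) := by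
    intro u
    rw [smul_eq_mul, abs_of_pos hA0]
    show A * ((A * u + x - x)^2 + B) ^ (-q) = _
    rw [show (A * u + x - x)^2 + B = B * (1 + u^2) by rw [← hAB]; ring,
      Real.mul_rpow hB.le (by positivity), show A = B ^ ((1:ℝ)/2) by
        rw [hA, Real.sqrt_eq_rpow], ← mul_assoc, ← Real.rpow_add hB]
    ring_nf
  obtain ⟨hstdInt, hstdVal⟩ := lineStd hq
  have hRHSint : Integrable (fun u : ℝ => B ^ ((1:ℝ)/2 - q) * (1 + u^2) ^ (-q)) :=
    hstdInt.const_mul _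
  constructor
  · rw [← integrableOn_univ, ← himg,
      integrableOn_image_iff_integrableOn_abs_deriv_smul MeasurableSet.univ hderiv hinj]
    exact (integrableOn_univ.mpr hRHSint).congr_fun (fun u _ => (key u).symm)
      MeasurableSet.univ
  · rw [← setIntegral_univ, ← himg,
      integral_image_eq_integral_abs_deriv_smul MeasurableSet.univ hderiv hinj,
      show (∫ u in univ, |A| • ((fun w : ℝ => ((w - x)^2 + B) ^ (-q)) (A * u + x)))
        = ∫ u in univ, B ^ ((1:ℝ)/2 - q) * (1 + u^2) ^ (-q) from
        setIntegral_congr_fun MeasurableSet.univ (fun u _ => key u),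
      setIntegral_univ, integral_const_mul, hstdVal]

lemma vWeight {lam t : ℝ} (hlam : 0 < lam) (ht : 0 < t) :
    IntegrableOn (fun v : ℝ => v ^ (2*lam - 1) * (v^2 + t^2) ^ (-(lam + 1/2))) (Ioi 0) ∧
    ∫ v in Ioi (0:ℝ), v ^ (2*lam - 1) * (v^2 + t^2) ^ (-(lam + 1/2))
      = (Gamma lam * Gamma (1/2) / Gamma (lam + 1/2) / 2) / t := by
  have himg : (fun s : ℝ => t * s) '' (Ioi 0) = Ioi 0 := by
    ext w
    simp only [mem_image, mem_Ioi]
    constructor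
    · rintro ⟨s, hs, rfl⟩; positivity
    · intro hw; exact ⟨w / t, by positivity, by field_simp⟩
  have hinj : InjOn (fun s : ℝ => t * s) (Ioi 0) :=
    fun u _ v _ h => mul_left_cancel₀ ht.ne' h
  have hderiv : ∀ s ∈ Ioi (0:ℝ),
      HasDerivWithinAt (fun s : ℝ => t * s) t (Ioi 0) s := by
    intro s _
    simpa using ((hasDerivAt_id s).const_mul t).hasDerivWithinAt
  have key : ∀ s ∈ Ioi (0:ℝ),
      |t| • ((fun v : ℝ => v ^ (2*lam - 1) * (v^2 + t^2) ^ (-(lam + 1/2))) (t * s))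
        = t⁻¹ * (s ^ (2*lam - 1) * (1 + s^2) ^ (-(lam + 1/2))) := by
    intro s hs
    simp only [mem_Ioi] at hs
    rw [smul_eq_mul, abs_of_pos ht]
    show t * ((t*s) ^ (2*lam - 1) * ((t*s)^2 + t^2) ^ (-(lam + 1/2))) = _
    rw [Real.mul_rpow ht.le hs.le,
      show (t*s)^2 + t^2 = t^2 * (1 + s^2) by ring,
      Real.mul_rpow (by positivity) (by positivity),
      show ((t:ℝ)^2) = t ^ (2:ℝ) by rw [Real.rpow_two], ← Real.rpow_mul ht.le]
    rw [show t * (t ^ (2*lam - 1) * s ^ (2*lam - 1) * (t ^ ((2:ℝ) * -(lam + 1/2))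
          * (1 + s^2) ^ (-(lam + 1/2))))
        = (t * t ^ (2*lam - 1) * t ^ ((2:ℝ) * -(lam + 1/2)))
          * (s ^ (2*lam - 1) * (1 + s^2) ^ (-(lam + 1/2))) from by ring]
    congr 1
    nth_rewrite 1 [show t = t ^ (1:ℝ) by rw [Real.rpow_one]]
    rw [← Real.rpow_add ht, ← Real.rpow_add ht,
      show ((1:ℝ) + (2*lam - 1) + 2 * -(lam + 1/2)) = -1 by ring, Real.rpow_neg_one]
  obtain ⟨hbi, hbv⟩ := betaSqIoi (a := lam) (c := 1/2) hlam (by norm_num)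
  constructor
  · rw [← himg,
      integrableOn_image_iff_integrableOn_abs_deriv_smul measurableSet_Ioi hderiv hinj]
    exact IntegrableOn.congr_fun (hbi.const_mul t⁻¹) (fun s hs => (key s hs).symm)
      measurableSet_Ioi
  · have h1 : ∫ v in Ioi (0:ℝ), v ^ (2*lam - 1) * (v^2 + t^2) ^ (-(lam + 1/2))
        = ∫ s in Ioi (0:ℝ), t⁻¹ * (s ^ (2*lam - 1) * (1 + s^2) ^ (-(lam + 1/2))) := by
      conv_lhs => rw [← himg]
      rw [integral_image_eq_integral_abs_deriv_smul measurableSet_Ioi hderiv hinj]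
      exact setIntegral_congr_fun measurableSet_Ioi key
    rw [h1, integral_const_mul, hbv]
    field_simp

/-! ### The plane integral -/

/-- The function on the plane whose polar form is the Bessel Poisson integrand. -/
def kf (lam t x : ℝ) : ℝ × ℝ → ℝ := fun p =>
  (if 0 < p.2 then p.2 ^ (2*lam - 1) else 0) * ((p.1 - x)^2 + p.2^2 + t^2) ^ (-(lam + 1))

lemma kf_nonneg (lam t x : ℝ) (p : ℝ × ℝ) : 0 ≤ kf lam t x p := by
  unfold kf
  apply mul_nonneg
  · split_ifs with h
    · exact Real.rpow_nonneg (le_of_lt h) _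
    · exact le_refl 0
  · exact Real.rpow_nonneg (by positivity) _

lemma planeIntegral {lam t x : ℝ} (hlam : 0 < lam) (ht : 0 < t) :
    Integrable (kf lam t x) ∧
    ∫ p : ℝ × ℝ, kf lam t x p = π / (2 * lam * t) := by
  set C : ℝ := Gamma (1/2) * Gamma (lam + 1/2) / Gamma (lam + 1) with hC
  have hq : (1:ℝ)/2 < lam + 1 := by linarith
  have hm : AEStronglyMeasurable (kf lam t x) volume := by
    apply Measurable.aestronglyMeasurable
    apply Measurable.mul
    · exact Measurable.ite (measurableSet_lt measurable_const measurable_snd)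
        (by fun_prop) measurable_const
    · fun_prop
  have habs : ∀ p : ℝ × ℝ, ‖kf lam t x p‖ = kf lam t x p :=
    fun p => Real.norm_of_nonneg (kf_nonneg lam t x p)
  have hB : ∀ v : ℝ, 0 < v^2 + t^2 := fun v => by positivity
  have hadd : ∀ u v : ℝ, (u - x)^2 + v^2 + t^2 = (u - x)^2 + (v^2 + t^2) :=
    fun u v => by ring
  have hv_inner : ∀ v : ℝ, (∫ u : ℝ, kf lam t x (u, v))
      = indicator (Ioi (0:ℝ))
        (fun v => C * (v ^ (2*lam - 1) * (v^2 + t^2) ^ (-(lam + 1/2)))) v := by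
    intro v
    by_cases hv : 0 < v
    · rw [indicator_of_mem (mem_Ioi.mpr hv)]
      have : (fun u : ℝ => kf lam t x (u, v))
          = fun u : ℝ => v ^ (2*lam - 1) * ((u - x)^2 + (v^2 + t^2)) ^ (-(lam+1)) := by
        funext u
        simp only [kf, hv, if_true, hadd u v]
      rw [this, integral_const_mul, (lineShift hq (hB v)).2]
      rw [show (1/2 - (lam + 1) : ℝ) = -(lam + 1/2) by ring,
        show (lam + 1 - 1/2 : ℝ) = lam + 1/2 by ring]
      ring
    · rw [indicator_of_notMem (by simpa using hv)]
      have : (fun u : ℝ => kf lam t x (u, v)) = fun _ : ℝ => (0:ℝ) := by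
        funext u
        simp only [kf, hv, if_false, zero_mul]
      rw [this, integral_zero]
  have hv_int : ∀ v : ℝ, Integrable (fun u : ℝ => kf lam t x (u, v)) := by
    intro v
    by_cases hv : 0 < v
    · have : (fun u : ℝ => kf lam t x (u, v))
          = fun u : ℝ => v ^ (2*lam - 1) * ((u - x)^2 + (v^2 + t^2)) ^ (-(lam+1)) := by
        funext u
        simp only [kf, hv, if_true, hadd u v]
      rw [this]
      exact (lineShift hq (hB v)).1.const_mul _
    · have : (fun u : ℝ => kf lam t x (u, v)) = fun _ : ℝ => (0:ℝ) := by
        funext u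
        simp only [kf, hv, if_false, zero_mul]
      rw [this]
      exact integrable_zero _ _ _
  obtain ⟨hwInt, hwVal⟩ := vWeight hlam ht
  have hindInt : Integrable (indicator (Ioi (0:ℝ))
      (fun v => C * (v ^ (2*lam - 1) * (v^2 + t^2) ^ (-(lam + 1/2))))) := by
    have h' : IntegrableOn
        (fun v : ℝ => C * (v ^ (2*lam - 1) * (v^2 + t^2) ^ (-(lam + 1/2)))) (Ioi 0) :=
      hwInt.const_mul C
    exact h'.integrable_indicator measurableSet_Ioi
  have hInt : Integrable (kf lam t x) := by
    rw [show (volume : Measure (ℝ × ℝ)) = volume.prod volume from Measure.volume_eq_prod ℝ ℝ]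
    rw [integrable_prod_iff' (by rwa [← Measure.volume_eq_prod])]
    refine ⟨Filter.Eventually.of_forall hv_int, ?_⟩
    simp only [habs]
    apply hindInt.congr
    refine Filter.Eventually.of_forall (fun v => ?_)
    exact (hv_inner v).symm
  refine ⟨hInt, ?_⟩
  have hswap : ∫ p : ℝ × ℝ, kf lam t x p = ∫ v : ℝ, ∫ u : ℝ, kf lam t x (u, v) := by
    rw [show (volume : Measure (ℝ × ℝ)) = volume.prod volume from Measure.volume_eq_prod ℝ ℝ]
    exact integral_prod_symm _ (by rwa [← Measure.volume_eq_prod])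
  rw [hswap]
  simp only [hv_inner]
  rw [integral_indicator measurableSet_Ioi, integral_const_mul, hwVal, hC]
  have hG1 : Gamma (1/2 : ℝ) = Real.sqrt π := Real.Gamma_one_half_eq
  have hG2 : Gamma (lam + 1) = lam * Gamma lam := Real.Gamma_add_one hlam.ne'
  have hgl : Gamma lam ≠ 0 := (Real.Gamma_pos_of_pos hlam).ne'
  have hgl2 : Gamma (lam + 1/2) ≠ 0 := (Real.Gamma_pos_of_pos (by linarith)).ne'
  have hsq : Real.sqrt π * Real.sqrt π = π := Real.mul_self_sqrt Real.pi_pos.le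
  rw [hG1, hG2]
  field_simp
  linear_combination hsq

/-! ### Polar coordinates -/

lemma polarStep {lam t x : ℝ} (hlam : 0 < lam) (ht : 0 < t) :
    IntegrableOn (fun p : ℝ × ℝ => p.1 • kf lam t x (polarCoord.symm p)) polarCoord.target ∧
    ∫ p in polarCoord.target, p.1 • kf lam t x (polarCoord.symm p) = π / (2 * lam * t) := by
  constructor
  · set B : ℝ × ℝ → ℝ × ℝ →L[ℝ] ℝ × ℝ := fun p =>
      LinearMap.toContinuousLinearMap (Matrix.toLin (Module.Basis.finTwoProd ℝ) (Module.Basis.finTwoProd ℝ)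
        !![cos p.2, -p.1 * sin p.2; sin p.2, p.1 * cos p.2]) with hB
    have A : ∀ p ∈ polarCoord.target,
        HasFDerivWithinAt polarCoord.symm (B p) polarCoord.target p :=
      fun p _ => (hasFDerivAt_polarCoord_symm p).hasFDerivWithinAt
    have B_det : ∀ p, (B p).det = p.1 := by
      intro p
      conv_rhs => rw [← one_mul p.1, ← cos_sq_add_sin_sq p.2]
      simp only [hB, neg_mul, LinearMap.det_toContinuousLinearMap, LinearMap.det_toLin,
        Matrix.det_fin_two_of, sub_neg_eq_add]
      ring
    have hinj : InjOn polarCoord.symm polarCoord.target := polarCoord.symm.injOn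
    have h1 : IntegrableOn (kf lam t x) (polarCoord.symm '' polarCoord.target) := by
      rw [polarCoord.symm_image_target_eq_source]
      exact (planeIntegral hlam ht).1.integrableOn
    rw [integrableOn_image_iff_integrableOn_abs_det_fderiv_smul volume
      polarCoord.open_target.measurableSet A hinj (kf lam t x)] at h1
    refine h1.congr_fun (fun p hp => ?_) polarCoord.open_target.measurableSet
    beta_reduce
    rw [B_det, abs_of_pos]
    exact hp.1
  · rw [integral_comp_polarCoord_symm (kf lam t x)]
    exact (planeIntegral hlam ht).2

lemma keyIterated {lam t x : ℝ} (hlam : 0 < lam) (ht : 0 < t) :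
    ∫ y in Ioi (0:ℝ), ∫ θ in Ioo (0:ℝ) π,
      y ^ (2*lam) * (Real.sin θ ^ (2*lam - 1)
        * ((x^2 + y^2 + t^2 - 2*x*y*Real.cos θ) ^ (-(lam+1))))
      = π / (2 * lam * t) := by
  set S : Set (ℝ × ℝ) := Ioi 0 ×ˢ Ioo 0 π with hS
  set F : ℝ × ℝ → ℝ := fun p => p.1 • kf lam t x (polarCoord.symm p) with hF
  set H : ℝ × ℝ → ℝ := fun p => p.1 ^ (2*lam) * (Real.sin p.2 ^ (2*lam - 1)
    * ((x^2 + p.1^2 + t^2 - 2*x*p.1*Real.cos p.2) ^ (-(lam+1)))) with hH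
  have hSmeas : MeasurableSet S := measurableSet_Ioi.prod measurableSet_Ioo
  have hSsub : S ⊆ polarCoord.target := by
    rw [polarCoord_target]
    intro p hp
    exact ⟨hp.1, ⟨by linarith [pi_pos, hp.2.1, mem_Ioo.mp hp.2 |>.1], hp.2.2⟩⟩
  have hFH : EqOn F H S := by
    rintro ⟨r, θ⟩ hp
    obtain ⟨hr, hθ⟩ := hp
    simp only [mem_Ioi] at hr
    obtain ⟨hθ1, hθ2⟩ := mem_Ioo.mp hθ
    have hsin : 0 < Real.sin θ := Real.sin_pos_of_pos_of_lt_pi hθ1 hθ2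
    have hcond : 0 < r * Real.sin θ := mul_pos hr hsin
    simp only [hF, hH, kf, polarCoord_symm_apply, smul_eq_mul, hcond, if_true]
    have hbase : (r * Real.cos θ - x)^2 + (r * Real.sin θ)^2 + t^2
        = x^2 + r^2 + t^2 - 2*x*r*Real.cos θ := by
      linear_combination (r^2) * Real.sin_sq_add_cos_sq θ
    rw [hbase, Real.mul_rpow hr.le hsin.le]
    have hrr : r * r ^ (2*lam - 1) = r ^ (2*lam) := by
      nth_rewrite 1 [show r = r ^ (1:ℝ) from (Real.rpow_one r).symm]
      rw [← Real.rpow_add hr, show (1 + (2*lam - 1) : ℝ) = 2*lam by ring]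
    rw [← hrr]
    ring
  have hzero : ∀ p ∈ polarCoord.target \ S, F p = 0 := by
    rintro ⟨r, θ⟩ ⟨hp, hns⟩
    rw [polarCoord_target] at hp
    obtain ⟨hr, hθ⟩ := hp
    simp only [mem_Ioi] at hr
    obtain ⟨hθ1, hθ2⟩ := mem_Ioo.mp hθ
    have hθ0 : θ ≤ 0 := by
      by_contra hc
      push_neg at hc
      exact hns ⟨mem_Ioi.mpr hr, mem_Ioo.mpr ⟨hc, hθ2⟩⟩
    have hsin : Real.sin θ ≤ 0 := by
      rcases eq_or_lt_of_le hθ0 with h | h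
      · simp [h]
      · exact le_of_lt (Real.sin_neg_of_neg_of_neg_pi_lt h hθ1)
    have hcond : ¬ (0 < r * Real.sin θ) :=
      not_lt.mpr (mul_nonpos_of_nonneg_of_nonpos hr.le hsin)
    simp only [hF, kf, polarCoord_symm_apply, smul_eq_mul, hcond, if_false, zero_mul, mul_zero]
  obtain ⟨hFint, hFval⟩ := polarStep (x := x) hlam ht
  have hHint : IntegrableOn H S := ((hFint.mono_set hSsub)).congr_fun hFH hSmeas
  have h1 : ∫ y in Ioi (0:ℝ), ∫ θ in Ioo (0:ℝ) π,
      y ^ (2*lam) * (Real.sin θ ^ (2*lam - 1)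
        * ((x^2 + y^2 + t^2 - 2*x*y*Real.cos θ) ^ (-(lam+1)))) = ∫ p in S, H p := by
    rw [hS, show (volume : Measure (ℝ × ℝ)) = volume.prod volume from Measure.volume_eq_prod ℝ ℝ]
    exact (setIntegral_prod H (by
      rwa [← Measure.volume_eq_prod, ← hS])).symm
  have h2 : ∫ p in S, H p = ∫ p in S, F p := (setIntegral_congr_fun hSmeas hFH).symm
  have h3 : ∫ p in polarCoord.target, F p = ∫ p in S, F p := by
    rw [show ∫ p in polarCoord.target, F p = ∫ p in polarCoord.target, S.indicator F p from
      setIntegral_congr_fun polarCoord.open_target.measurableSet (fun p hp => by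
        by_cases hps : p ∈ S
        · rw [indicator_of_mem hps]
        · rw [indicator_of_notMem hps]
          exact hzero p ⟨hp, hps⟩)]
    rw [setIntegral_indicator hSmeas, inter_eq_self_of_subset_right hSsub]
  rw [h1, h2, ← h3, hFval]

end BesselPoissonAux

/-- Conservation property of the Bessel Poisson semigroup:
`∫₀^∞ P_t^{[λ]}(x,y) y^{2λ} dy = 1` for all `t, x > 0`. -/
theorem stmt10 (lam : ℝ) (hlam : 0 < lam) :
    ∀ t x : ℝ, 0 < t → 0 < x →
      ∫ y in Ioi (0 : ℝ), besselP lam t x y * y ^ (2 * lam) = 1 := by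
  intro t x ht hx
  have hpi := Real.pi_pos
  have hcongr : ∀ y ∈ Ioi (0:ℝ), besselP lam t x y * y ^ (2*lam)
      = (2*lam*t/Real.pi) * ∫ θ in Ioo (0:ℝ) Real.pi,
        y ^ (2*lam) * (Real.sin θ ^ (2*lam - 1)
          * ((x^2 + y^2 + t^2 - 2*x*y*Real.cos θ) ^ (-(lam+1)))) := by
    intro y hy
    simp only [mem_Ioi] at hy
    unfold besselP
    rw [mul_assoc, ← MeasureTheory.integral_mul_const]
    congr 1
    refine setIntegral_congr_fun measurableSet_Ioo (fun θ hθ => ?_)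
    have hD : (0:ℝ) < x^2 + y^2 + t^2 - 2*x*y*Real.cos θ := by
      nlinarith [Real.cos_le_one θ, mul_pos hx hy, sq_nonneg (x - y), sq_nonneg t, ht]
    rw [Real.rpow_neg hD.le, div_eq_mul_inv]
    ring
  rw [setIntegral_congr_fun measurableSet_Ioi hcongr, MeasureTheory.integral_const_mul,
    BesselPoissonAux.keyIterated hlam ht]
  field_simp
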